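/- Let G be a connected finite simple graph with at least one pendant vertex, consisting of n ≥ 4 edges. Then λ_{1,1}(G) ≥ λ_{1,1}(T_{n,3}). -/
import Mathlib


attribute [local instance] Classical.propDecidable

open Finset

/-- The degree of a vertex `x` in a finite simple graph `G`. -/
noncomputable def deg {V : Type*} [Fintype V] (G : SimpleGraph V) (x : V) : ℕ :=
  (Finset.univ.filter (fun y => G.Adj x y)).card

/-- The `p`-energy `‖df‖_{p,G}^p = Σ_{{x,y} ∈ E(G)} |f x - f y|^p`
(each unordered edge counted once, i.e. half the double sum). -/
noncomputable def energy {V : Type*} [Fintype V] (G : SimpleGraph V) (p : ℝ) (f : V → ℝ) : ℝ :=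
  (∑ x : V, ∑ y : V, if G.Adj x y then |f x - f y| ^ p else 0) / 2

/-- The weighted `p`-norm `‖f‖_{p,G}^p = Σ_x |f x|^p · deg x`. -/
noncomputable def pnorm {V : Type*} [Fintype V] (G : SimpleGraph V) (p : ℝ) (f : V → ℝ) : ℝ :=
  ∑ x : V, |f x| ^ p * (deg G x : ℝ)

/-- The `p`-Rayleigh quotient `R_{p,G}[f]`. -/
noncomputable def rayleigh {V : Type*} [Fintype V] (G : SimpleGraph V) (p : ℝ) (f : V → ℝ) : ℝ :=
  energy G p f / pnorm G p f

/-- The first `p`-Dirichlet eigenvalue `λ_{1,p}(G)`: the infimum of Rayleigh quotients of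
nonzero functions vanishing on the boundary `B(G)` (the set of pendant vertices). -/
noncomputable def lambda1 {V : Type*} [Fintype V] (G : SimpleGraph V) (p : ℝ) : ℝ :=
  sInf { r : ℝ | ∃ f : V → ℝ, (∀ x : V, deg G x = 1 → f x = 0) ∧ f ≠ 0 ∧ r = rayleigh G p f }

/-- The number of edges with exactly one endpoint in `U`. -/
noncomputable def cutCard {V : Type*} [Fintype V] (G : SimpleGraph V) (U : Finset V) : ℕ :=
  ∑ x ∈ U, (Finset.univ.filter (fun y => G.Adj x y ∧ y ∉ U)).card

/-- The Dirichlet Cheeger constant `h_D(G)`. -/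
noncomputable def cheeger {V : Type*} [Fintype V] (G : SimpleGraph V) : ℝ :=
  sInf { r : ℝ | ∃ U : Finset V, U.Nonempty ∧ (∀ x ∈ U, deg G x ≠ 1) ∧
    r = (cutCard G U : ℝ) / ∑ x ∈ U, (deg G x : ℝ) }

/-- The tadpole graph `T_{n,i}` on vertices `0, …, n-1` (vertex `k-1` representing `t_k`):
edges between consecutive vertices together with the edge `t_1 ∼ t_i`. -/
def tadpole (n i : ℕ) : SimpleGraph (Fin n) :=
  SimpleGraph.fromRel (fun a b => b.val = a.val + 1 ∨ (a.val = 0 ∧ b.val = i - 1))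

/-- The path graph on `n` vertices. -/
def pathG (n : ℕ) : SimpleGraph (Fin n) :=
  SimpleGraph.fromRel (fun a b => b.val = a.val + 1)

section Aux
open SimpleGraph
variable {V : Type*} [Fintype V]


noncomputable def aD (f : V → ℝ) : Sym2 V → ℝ :=
  Sym2.lift ⟨fun x y => |f x - f y|, fun x y => by simp [abs_sub_comm]⟩

@[simp] lemma aD_mk (f : V → ℝ) (a b : V) : aD f s(a, b) = |f a - f b| := rfl

lemma double_sum_eq (G : SimpleGraph V) (f : V → ℝ) :
    ∑ x : V, ∑ y : V, (if G.Adj x y then |f x - f y| else 0)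
      = 2 * ∑ e ∈ G.edgeFinset, aD f e := by
  rw [← Finset.sum_product']
  rw [← Finset.sum_filter (fun p : V × V => G.Adj p.1 p.2) (fun p => |f p.1 - f p.2|)]
  rw [← Finset.sum_fiberwise_of_maps_to (g := fun p : V × V => s(p.1, p.2))
    (t := G.edgeFinset) (fun p hp => by
      simp only [Finset.mem_filter] at hp
      simpa [SimpleGraph.mem_edgeFinset] using hp.2)]
  rw [Finset.mul_sum]
  refine Finset.sum_congr rfl fun e he => ?_
  induction e with
  | _ a b =>
    simp only [SimpleGraph.mem_edgeFinset, SimpleGraph.mem_edgeSet] at he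
    have hfib : ((univ ×ˢ univ).filter (fun p : V × V => G.Adj p.1 p.2)).filter
        (fun p => s(p.1, p.2) = s(a, b)) = {(a, b), (b, a)} := by
      ext p
      simp only [Finset.mem_filter, Finset.mem_product, Finset.mem_univ, true_and,
        Finset.mem_insert, Finset.mem_singleton, Sym2.eq_iff, Prod.ext_iff]
      constructor
      · rintro ⟨_, (⟨h1, h2⟩ | ⟨h1, h2⟩)⟩
        · exact Or.inl ⟨h1, h2⟩
        · exact Or.inr ⟨h1, h2⟩
      · rintro (⟨h1, h2⟩ | ⟨h1, h2⟩) <;> subst h1 <;> subst h2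
        · exact ⟨he, Or.inl ⟨rfl, rfl⟩⟩
        · exact ⟨he.symm, Or.inr ⟨rfl, rfl⟩⟩
    rw [hfib]
    rw [Finset.sum_pair (by simp [Prod.ext_iff]; rintro rfl; exact fun h => he.ne h.symm)]
    simp [abs_sub_comm (f b) (f a)]
    ring

lemma energy_eq (G : SimpleGraph V) (f : V → ℝ) :
    (∑ x : V, ∑ y : V, if G.Adj x y then |f x - f y| ^ (1:ℝ) else 0) / 2
      = ∑ e ∈ G.edgeFinset, aD f e := by
  have : ∀ x y : V, (if G.Adj x y then |f x - f y| ^ (1:ℝ) else 0)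
      = (if G.Adj x y then |f x - f y| else 0) := by
    intro x y; simp [Real.rpow_one]
  simp only [this]
  rw [double_sum_eq]; ring

lemma walk_telescope (G : SimpleGraph V) (f : V → ℝ) {a b : V} (w : G.Walk a b) :
    |f a - f b| ≤ (w.edges.map (aD f)).sum := by
  induction w with
  | nil => simp
  | @cons u v c h p ih =>
      rw [SimpleGraph.Walk.edges_cons, List.map_cons, List.sum_cons]
      calc |f u - f c| ≤ |f u - f v| + |f v - f c| := abs_sub_le _ _ _
        _ ≤ aD f s(u, v) + (p.edges.map (aD f)).sum := by
            exact add_le_add le_rfl ih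
        _ = _ := rfl

lemma energy_lower (G : SimpleGraph V) (hconn : G.Connected) (f : V → ℝ)
    {x0 m : V} (h0 : f x0 = 0) :
    |f m| ≤ (∑ x : V, ∑ y : V, if G.Adj x y then |f x - f y| ^ (1:ℝ) else 0) / 2 := by
  rw [energy_eq]
  obtain ⟨w⟩ := hconn x0 m
  set q : G.Walk x0 m := (w.toPath : G.Walk x0 m) with hq
  have h1 : |f m| ≤ (q.edges.map (aD f)).sum := by
    have := walk_telescope G f q
    rwa [h0, zero_sub, abs_neg] at this
  have h2 : (q.edges.map (aD f)).sum = ∑ e ∈ q.edges.toFinset, aD f e := by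
    rw [List.sum_toFinset _ (w.toPath.2.isTrail.edges_nodup)]
  have h3 : ∑ e ∈ q.edges.toFinset, aD f e ≤ ∑ e ∈ G.edgeFinset, aD f e := by
    apply Finset.sum_le_sum_of_subset_of_nonneg
    · intro e he
      simp only [List.mem_toFinset] at he
      simpa [SimpleGraph.mem_edgeFinset] using q.edges_subset_edgeSet he
    · intro e _ _
      induction e with
      | _ x y => exact abs_nonneg _
  linarith

lemma deg_eq_degree (G : SimpleGraph V) (x : V) [DecidableRel G.Adj] :
    deg G x = G.degree x := by
  unfold deg SimpleGraph.degree
  congr 1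
  ext y
  simp [SimpleGraph.mem_neighborFinset]

lemma sum_deg (G : SimpleGraph V) [DecidableRel G.Adj] :
    ∑ x : V, deg G x = 2 * G.edgeFinset.card := by
  simp only [deg_eq_degree]
  exact SimpleGraph.sum_degrees_eq_twice_card_edges G

lemma deg_pos (G : SimpleGraph V) (hconn : G.Connected) (hnt : Nontrivial V) (x : V) :
    0 < deg G x := by
  obtain ⟨y, hy⟩ := exists_ne (α := V) x
  obtain ⟨w⟩ := hconn x y
  cases w with
  | nil => exact absurd rfl hy.symm
  | cons h p =>
      rw [deg, Finset.card_pos]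
      exact ⟨_, Finset.mem_filter.mpr ⟨Finset.mem_univ _, h⟩⟩

lemma exists_nonpendant (G : SimpleGraph V) (hconn : G.Connected)
    (hcard : 2 ≤ G.edgeFinset.card) : ∃ z : V, deg G z ≠ 1 := by
  by_contra hall
  push_neg at hall
  -- every vertex has degree 1
  obtain ⟨e, he⟩ : G.edgeFinset.Nonempty := Finset.card_pos.mp (by omega)
  induction e with
  | _ a b =>
    simp only [SimpleGraph.mem_edgeFinset, SimpleGraph.mem_edgeSet] at he
    -- neighbors of a = {b}
    have hnb : ∀ u v : V, G.Adj u v → (Finset.univ.filter (fun y => G.Adj u y)) = {v} := by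
      intro u v huv
      apply Finset.eq_singleton_iff_unique_mem.mpr
      refine ⟨by simp [huv], fun z hz => ?_⟩
      have h1 := hall u
      rw [deg] at h1
      have hvmem : v ∈ Finset.univ.filter (fun y => G.Adj u y) := by simp [huv]
      rw [Finset.card_eq_one] at h1
      obtain ⟨c, hc⟩ := h1
      rw [hc, Finset.mem_singleton] at hz hvmem
      rw [hz, hvmem]
    -- every vertex is a or b
    have hab : ∀ (u z : V) (w : G.Walk u z), (u = a ∨ u = b) → (z = a ∨ z = b) := by
      intro u z w
      induction w with
      | nil => exact id
      | @cons u' v' z' h p ih =>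
          intro hu
          apply ih
          rcases hu with rfl | rfl
          · have := hnb u' b (by exact he)
            have hv : v' ∈ Finset.univ.filter (fun y => G.Adj u' y) := by simp [h]
            rw [this, Finset.mem_singleton] at hv
            exact Or.inr hv
          · have := hnb u' a he.symm
            have hv : v' ∈ Finset.univ.filter (fun y => G.Adj u' y) := by simp [h]
            rw [this, Finset.mem_singleton] at hv
            exact Or.inl hv
    -- so every edge is s(a,b)
    have hsub : G.edgeFinset ⊆ {s(a, b)} := by
      intro e' he'
      induction e' with
      | _ c d =>
        simp only [SimpleGraph.mem_edgeFinset, SimpleGraph.mem_edgeSet] at he'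
        have hc : c = a ∨ c = b := by
          obtain ⟨w⟩ := hconn a c
          exact hab a c w (Or.inl rfl)
        simp only [Finset.mem_singleton, Sym2.eq_iff]
        rcases hc with rfl | rfl
        · have := hnb c b he
          have hd : d ∈ Finset.univ.filter (fun y => G.Adj c y) := by simp [he']
          rw [this, Finset.mem_singleton] at hd
          exact Or.inl ⟨rfl, hd⟩
        · have := hnb c a he.symm
          have hd : d ∈ Finset.univ.filter (fun y => G.Adj c y) := by simp [he']
          rw [this, Finset.mem_singleton] at hd
          exact Or.inr ⟨rfl, hd⟩
    have := Finset.card_le_card hsub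
    rw [Finset.card_singleton] at this
    omega

end Aux


lemma tad_adj {n : ℕ} (x y : Fin n) : (tadpole n 3).Adj x y ↔ x ≠ y ∧
    ((y.val = x.val + 1 ∨ (x.val = 0 ∧ y.val = 2)) ∨
     (x.val = y.val + 1 ∨ (y.val = 0 ∧ x.val = 2))) := by
  simp [tadpole, SimpleGraph.fromRel_adj]

lemma tad_deg {n : ℕ} (hn : 4 ≤ n) (x : Fin n) (hx : x.val ≠ n - 1) :
    deg (tadpole n 3) x = if x.val = 2 then 3 else 2 := by
  have hxn := x.isLt
  rw [deg]
  by_cases h2 : x.val = 2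
  · rw [if_pos h2]
    have hset : Finset.univ.filter (fun y => (tadpole n 3).Adj x y)
        = {(⟨0, by omega⟩ : Fin n), ⟨1, by omega⟩, ⟨3, by omega⟩} := by
      ext y
      have hy := y.isLt
      simp only [Finset.mem_filter, Finset.mem_univ, true_and, tad_adj,
        Finset.mem_insert, Finset.mem_singleton, Fin.ext_iff, ne_eq]
      omega
    rw [hset]
    rw [Finset.card_insert_of_notMem (by simp [Fin.ext_iff]),
      Finset.card_insert_of_notMem (by simp [Fin.ext_iff]),
      Finset.card_singleton]
  · rw [if_neg h2]
    by_cases h0 : x.val = 0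
    · have hset : Finset.univ.filter (fun y => (tadpole n 3).Adj x y)
          = {(⟨1, by omega⟩ : Fin n), ⟨2, by omega⟩} := by
        ext y
        have hy := y.isLt
        simp only [Finset.mem_filter, Finset.mem_univ, true_and, tad_adj,
          Finset.mem_insert, Finset.mem_singleton, Fin.ext_iff, ne_eq]
        omega
      rw [hset]
      rw [Finset.card_insert_of_notMem (by simp [Fin.ext_iff]), Finset.card_singleton]
    · have hset : Finset.univ.filter (fun y => (tadpole n 3).Adj x y)
          = {(⟨x.val - 1, by omega⟩ : Fin n), ⟨x.val + 1, by omega⟩} := by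
        ext y
        have hy := y.isLt
        simp only [Finset.mem_filter, Finset.mem_univ, true_and, tad_adj,
          Finset.mem_insert, Finset.mem_singleton, Fin.ext_iff, ne_eq]
        omega
      rw [hset]
      rw [Finset.card_insert_of_notMem (by simp [Fin.ext_iff]), Finset.card_singleton]

lemma tad_pendant {n : ℕ} (hn : 4 ≤ n) (x : Fin n) (hx : deg (tadpole n 3) x = 1) :
    x.val = n - 1 := by
  by_contra h
  rw [tad_deg hn x h] at hx
  split_ifs at hx <;> omega

/-- The test function on the tadpole: indicator of the interior. -/
noncomputable def tadf (n : ℕ) : Fin n → ℝ := fun k => if k.val = n - 1 then 0 else 1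

lemma tad_energy {n : ℕ} (hn : 4 ≤ n) : energy (tadpole n 3) 1 (tadf n) = 1 := by
  rw [energy]
  have hrw : ∀ x y : Fin n, (if (tadpole n 3).Adj x y then |tadf n x - tadf n y| ^ (1:ℝ) else 0)
      = (if (tadpole n 3).Adj x y then |tadf n x - tadf n y| else 0) := by
    intro x y; simp [Real.rpow_one]
  simp only [hrw]
  have key : ∀ x y : Fin n, (if (tadpole n 3).Adj x y then |tadf n x - tadf n y| else 0)
      = (if x.val = n - 2 ∧ y.val = n - 1 then (1:ℝ) else 0)
        + (if x.val = n - 1 ∧ y.val = n - 2 then (1:ℝ) else 0) := by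
    intro x y
    have hx := x.isLt
    have hy := y.isLt
    by_cases hadj : (tadpole n 3).Adj x y
    · obtain ⟨hne, hrel⟩ := (tad_adj x y).mp hadj
      have hne' : x.val ≠ y.val := fun h => hne (Fin.ext h)
      rw [if_pos hadj]
      unfold tadf
      by_cases hx1 : x.val = n - 1
      · have hy2 : y.val = n - 2 := by omega
        rw [if_pos hx1, if_neg (by omega), if_neg (by omega), if_pos ⟨hx1, hy2⟩]
        norm_num
      · by_cases hy1 : y.val = n - 1
        · have hx2 : x.val = n - 2 := by omega
          rw [if_neg hx1, if_pos hy1, if_pos ⟨hx2, hy1⟩, if_neg (by omega)]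
          norm_num
        · rw [if_neg hx1, if_neg hy1, if_neg (by omega), if_neg (by omega)]
          norm_num
    · rw [if_neg hadj]
      rw [if_neg, if_neg]
      · norm_num
      · rintro ⟨h1, h2⟩
        exact hadj ((tad_adj x y).mpr ⟨by simp only [ne_eq, Fin.ext_iff]; omega, by omega⟩)
      · rintro ⟨h1, h2⟩
        exact hadj ((tad_adj x y).mpr ⟨by simp only [ne_eq, Fin.ext_iff]; omega, by omega⟩)
  simp only [key]
  rw [← Finset.sum_product']
  rw [Finset.sum_add_distrib]
  have e1 : ∀ (a b : ℕ) (ha : a < n) (hb : b < n),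
      (∑ p ∈ (Finset.univ ×ˢ Finset.univ : Finset (Fin n × Fin n)),
        if p.1.val = a ∧ p.2.val = b then (1:ℝ) else 0) = 1 := by
    intro a b ha hb
    have : ∀ p : Fin n × Fin n, (if p.1.val = a ∧ p.2.val = b then (1:ℝ) else 0)
        = if p = ((⟨a, ha⟩ : Fin n), (⟨b, hb⟩ : Fin n)) then (1:ℝ) else 0 := by
      intro p
      congr 1
      simp [Prod.ext_iff, Fin.ext_iff]
    simp only [this]
    rw [Finset.sum_ite_eq' (Finset.univ ×ˢ Finset.univ) (((⟨a, ha⟩ : Fin n), (⟨b, hb⟩ : Fin n)))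
      (fun _ => (1:ℝ))]
    simp
  rw [e1 (n-2) (n-1) (by omega) (by omega), e1 (n-1) (n-2) (by omega) (by omega)]
  norm_num


lemma tad_pnorm {n : ℕ} (hn : 4 ≤ n) : pnorm (tadpole n 3) 1 (tadf n) = 2 * n - 1 := by
  rw [pnorm]
  have hptw : ∀ x : Fin n, |tadf n x| ^ (1:ℝ) * (deg (tadpole n 3) x : ℝ)
      = (fun k : ℕ => if k = n - 1 then (0:ℝ) else if k = 2 then 3 else 2) x.val := by
    intro x
    simp only [Real.rpow_one]
    by_cases hx : x.val = n - 1
    · unfold tadf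
      rw [if_pos hx, if_pos hx]
      simp
    · unfold tadf
      rw [if_neg hx, if_neg hx, tad_deg hn x hx]
      split_ifs <;> norm_num
  simp only [hptw]
  rw [Fin.sum_univ_eq_sum_range (fun k : ℕ => if k = n - 1 then (0:ℝ) else if k = 2 then 3 else 2) n]
  have hsplit : ∀ k : ℕ, (if k = n - 1 then (0:ℝ) else if k = 2 then 3 else 2)
      = 2 + (if k = 2 then (1:ℝ) else 0) - (if k = n - 1 then (2:ℝ) else 0) := by
    intro k
    split_ifs <;> first | omega | norm_num
  simp only [hsplit]
  rw [Finset.sum_sub_distrib, Finset.sum_add_distrib]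
  rw [Finset.sum_const, Finset.card_range]
  have e2 : (∑ k ∈ Finset.range n, if k = 2 then (1:ℝ) else 0) = 1 := by
    rw [Finset.sum_ite_eq' (Finset.range n) 2 (fun _ => (1:ℝ))]
    rw [if_pos (Finset.mem_range.mpr (by omega))]
  have e3 : (∑ k ∈ Finset.range n, if k = n - 1 then (2:ℝ) else 0) = 2 := by
    rw [Finset.sum_ite_eq' (Finset.range n) (n-1) (fun _ => (2:ℝ))]
    rw [if_pos (Finset.mem_range.mpr (by omega))]
  rw [e2, e3]
  push_cast
  ring

lemma tad_rayleigh {n : ℕ} (hn : 4 ≤ n) :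
    rayleigh (tadpole n 3) 1 (tadf n) = 1 / (2 * n - 1 : ℝ) := by
  rw [rayleigh, tad_energy hn, tad_pnorm hn]


lemma rayleigh_lower {V : Type*} [Fintype V] (G : SimpleGraph V)
    (hconn : G.Connected) {x0 : V} (hx0 : deg G x0 = 1)
    (n : ℕ) (hn : 4 ≤ n) (hedges : G.edgeFinset.card = n)
    (f : V → ℝ) (hf0 : ∀ x, deg G x = 1 → f x = 0) (hf : f ≠ 0) :
    1 / (2 * (n:ℝ) - 1) ≤ rayleigh G 1 f := by
  classical
  obtain ⟨e, he⟩ : G.edgeFinset.Nonempty := Finset.card_pos.mp (by omega)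
  have hnt : Nontrivial V := by
    induction e with
    | _ a b =>
      simp only [SimpleGraph.mem_edgeFinset, SimpleGraph.mem_edgeSet] at he
      exact ⟨a, b, he.ne⟩
  obtain ⟨m, -, hm⟩ := Finset.exists_max_image (Finset.univ : Finset V) (fun x => |f x|)
    ⟨x0, Finset.mem_univ x0⟩
  obtain ⟨z, hz⟩ := Function.ne_iff.mp hf
  have hz' : f z ≠ 0 := by simpa using hz
  have hMpos : 0 < |f m| := lt_of_lt_of_le (abs_pos.mpr hz') (hm z (Finset.mem_univ z))
  have hE : |f m| ≤ energy G 1 f := by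
    rw [energy]
    exact energy_lower G hconn f (hf0 x0 hx0)
  have hpn : pnorm G 1 f = ∑ x : V, |f x| * (deg G x : ℝ) := by
    rw [pnorm]; simp [Real.rpow_one]
  have hdpos : ∀ x : V, 0 < (deg G x : ℝ) := fun x =>
    Nat.cast_pos.mpr (deg_pos G hconn hnt x)
  have hPpos : 0 < pnorm G 1 f := by
    rw [hpn]
    apply Finset.sum_pos' (fun x _ => mul_nonneg (abs_nonneg _) (le_of_lt (hdpos x)))
    exact ⟨z, Finset.mem_univ z, mul_pos (abs_pos.mpr hz') (hdpos z)⟩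
  have hsumdeg : ∑ x : V, (deg G x : ℝ) = 2 * n := by
    rw [← Nat.cast_sum, sum_deg G, hedges]
    push_cast; ring
  have hPle : pnorm G 1 f ≤ (2 * (n:ℝ) - 1) * |f m| := by
    rw [hpn, ← Finset.add_sum_erase _ _ (Finset.mem_univ x0), hf0 x0 hx0]
    simp only [abs_zero, zero_mul, zero_add]
    have herase : ∑ x ∈ Finset.univ.erase x0, (deg G x : ℝ) = 2 * (n:ℝ) - 1 := by
      have h := Finset.add_sum_erase (Finset.univ : Finset V) (fun x => (deg G x : ℝ))
        (Finset.mem_univ x0)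
      simp only [hx0, Nat.cast_one] at h
      rw [hsumdeg] at h
      linarith
    calc ∑ x ∈ Finset.univ.erase x0, |f x| * (deg G x : ℝ)
        ≤ ∑ x ∈ Finset.univ.erase x0, |f m| * (deg G x : ℝ) :=
          Finset.sum_le_sum (fun i _ =>
            mul_le_mul_of_nonneg_right (hm i (Finset.mem_univ i)) (le_of_lt (hdpos i)))
      _ = |f m| * ∑ x ∈ Finset.univ.erase x0, (deg G x : ℝ) := by rw [Finset.mul_sum]
      _ = (2 * (n:ℝ) - 1) * |f m| := by rw [herase]; ring
  have h2n : (1:ℝ) ≤ 2 * (n:ℝ) - 1 := by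
    have : (4:ℝ) ≤ n := by exact_mod_cast hn
    linarith
  rw [rayleigh, div_le_div_iff₀ (by linarith) hPpos]
  nlinarith [mul_le_mul_of_nonneg_left hE (by linarith : (0:ℝ) ≤ 2 * (n:ℝ) - 1)]

/-- Faber–Krahn inequality for `p = 1`: for any connected finite simple graph `G` with at
least one pendant vertex and `n ≥ 4` edges, `λ_{1,1}(G) ≥ λ_{1,1}(T_{n,3})`. -/
theorem faber_krahn_one {V : Type*} [Fintype V] (G : SimpleGraph V)
    (hconn : G.Connected) (hpend : ∃ x : V, deg G x = 1)
    (n : ℕ) (hn : 4 ≤ n) (hedges : G.edgeFinset.card = n) :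
    lambda1 (tadpole n 3) 1 ≤ lambda1 G 1 := by
  obtain ⟨x0, hx0⟩ := hpend
  have h1 : 1 / (2 * (n:ℝ) - 1) ≤ lambda1 G 1 := by
    rw [lambda1]
    apply le_csInf
    · obtain ⟨z, hz⟩ := exists_nonpendant G hconn (by omega)
      refine ⟨rayleigh G 1 (fun x => if x = z then 1 else 0),
        (fun x => if x = z then 1 else 0), fun x hx => ?_, fun h => ?_, rfl⟩
      · show (if x = z then (1:ℝ) else 0) = 0
        rw [if_neg]; rintro rfl; exact hz hx
      · have := congrFun h z
        simp at this
    · rintro r ⟨f, hf0, hf, rfl⟩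
      exact rayleigh_lower G hconn hx0 n hn hedges f hf0 hf
  have h2 : lambda1 (tadpole n 3) 1 ≤ 1 / (2 * (n:ℝ) - 1) := by
    rw [lambda1, ← tad_rayleigh hn]
    apply csInf_le
    · refine ⟨0, fun r hr => ?_⟩
      obtain ⟨f, -, -, rfl⟩ := hr
      rw [rayleigh]
      apply div_nonneg _ _
      · rw [energy]
        apply div_nonneg _ (by norm_num)
        apply Finset.sum_nonneg; intro x _
        apply Finset.sum_nonneg; intro y _
        split_ifs
        · exact Real.rpow_nonneg (abs_nonneg _) _
        · exact le_rfl
      · rw [pnorm]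
        apply Finset.sum_nonneg; intro x _
        exact mul_nonneg (Real.rpow_nonneg (abs_nonneg _) _) (Nat.cast_nonneg _)
    · refine ⟨tadf n, fun x hx => ?_, fun h => ?_, rfl⟩
      · unfold tadf
        rw [if_pos (tad_pendant hn x hx)]
      · have h0 := congrFun h (⟨0, by omega⟩ : Fin n)
        unfold tadf at h0
        rw [if_neg (by simp; omega)] at h0
        simp at h0
  linarith
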